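/- Let W > 0, λ > 0, and −1 < a < 1. Suppose u : ℝ → ℝ is continuously differentiable on [a,1], twice differentiable on (a,1) with u''(x) = λ/(2·(1+u(x)+W)²) for all x ∈ (a,1), and satisfies u(a) = −1, u'(a) = 0, u(1) = 0, and u(x) > −1 for x ∈ (a,1]. Then λ > Λ_*(W)/4 and a = 1 − √(Λ_*(W)/λ). -/

import Mathlib

/-- `φ(r) = √(r(1−r)) + (1−r)^{3/2}·log(1+√r) − (1/2)(1−r)^{3/2}·log(1−r)`. -/
noncomputable def phi (r : ℝ) : ℝ :=
  Real.sqrt (r * (1 - r)) + (1 - r) ^ ((3 : ℝ) / 2) * Real.log (1 + Real.sqrt r)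
    - (1 / 2) * (1 - r) ^ ((3 : ℝ) / 2) * Real.log (1 - r)

/-- `Λ_*(W) = (1+W)³·φ(1/(1+W))²`. -/
noncomputable def LambdaStar (W : ℝ) : ℝ := (1 + W) ^ 3 * (phi (1 / (1 + W))) ^ 2

/-- Necessary condition for the zipped shooting problem: `λ > Λ_*(W)/4` and
`a = 1 − √(Λ_*(W)/λ)`. -/
noncomputable def gg (W v : ℝ) : ℝ :=
  Real.sqrt (v*(v+W)) + W * Real.log (Real.sqrt v + Real.sqrt (v+W))

lemma gg_deriv (W : ℝ) (hW : 0 < W) (v : ℝ) (hv : 0 < v) :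
    HasDerivAt (gg W) (Real.sqrt (v+W) / Real.sqrt v) v := by
  have hvW : 0 < v + W := by linarith
  have hA : 0 < Real.sqrt v := Real.sqrt_pos.mpr hv
  have hB : 0 < Real.sqrt (v+W) := Real.sqrt_pos.mpr hvW
  have h1 : HasDerivAt (fun v : ℝ => v*(v+W)) (2*v+W) v := by
    have := (hasDerivAt_id v).mul ((hasDerivAt_id v).add_const W)
    refine this.congr_deriv ?_; simp [id]; ring
  have h2 : HasDerivAt (fun v : ℝ => Real.sqrt (v*(v+W)))
      ((1/(2*Real.sqrt (v*(v+W)))) * (2*v+W)) v :=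
    (Real.hasDerivAt_sqrt (by positivity)).comp v h1
  have h3 : HasDerivAt (fun v : ℝ => Real.sqrt v + Real.sqrt (v+W))
      (1/(2*Real.sqrt v) + 1/(2*Real.sqrt (v+W))) v := by
    have ha := Real.hasDerivAt_sqrt hv.ne'
    have hb : HasDerivAt (fun v : ℝ => Real.sqrt (v+W)) (1/(2*Real.sqrt (v+W))) v := by
      have := (Real.hasDerivAt_sqrt hvW.ne').comp v ((hasDerivAt_id v).add_const W)
      exact this.congr_deriv (mul_one _)
    exact ha.add hb
  have h4 : HasDerivAt (fun v : ℝ => Real.log (Real.sqrt v + Real.sqrt (v+W)))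
      ((Real.sqrt v + Real.sqrt (v+W))⁻¹ * (1/(2*Real.sqrt v) + 1/(2*Real.sqrt (v+W)))) v :=
    (Real.hasDerivAt_log (by positivity)).comp v h3
  have := h2.add (h4.const_mul W)
  refine this.congr_deriv ?_; symm
  rw [Real.sqrt_mul hv.le]
  set A := Real.sqrt v
  set B := Real.sqrt (v+W)
  have hA2 : A^2 = v := Real.sq_sqrt hv.le
  have hB2 : B^2 = v + W := Real.sq_sqrt hvW.le
  have hWe : W = B^2 - A^2 := by rw [hA2, hB2]; ring
  rw [hWe, ← hA2]
  field_simp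
  ring

lemma rpow_3half (x : ℝ) (hx : 0 < x) : x ^ ((3:ℝ)/2) = x * Real.sqrt x := by
  rw [show (3:ℝ)/2 = 1 + 1/2 by norm_num, Real.rpow_add hx, Real.rpow_one,
    ← Real.sqrt_eq_rpow]

lemma key_alg (W : ℝ) (hW : 0 < W) :
    (1+W) * Real.sqrt (1+W) * phi (1/(1+W)) = Real.sqrt W * (gg W 1 - gg W 0) := by
  have h1W : (0:ℝ) < 1 + W := by linarith
  have hs0 : 0 < Real.sqrt (1+W) := Real.sqrt_pos.mpr h1W
  have ht0 : 0 < Real.sqrt W := Real.sqrt_pos.mpr hW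
  have hWW : 0 < W/(1+W) := by positivity
  have hgg1 : gg W 1 = Real.sqrt (1+W) + W * Real.log (1 + Real.sqrt (1+W)) := by
    unfold gg; rw [one_mul, Real.sqrt_one]
  have hgg0 : gg W 0 = W * (Real.log W / 2) := by
    unfold gg; simp [Real.log_sqrt hW.le]
  have hphi : phi (1/(1+W)) = Real.sqrt W/(1+W)
      + (W/(1+W)) * (Real.sqrt W/Real.sqrt (1+W)) *
          (Real.log (1 + Real.sqrt (1+W)) - Real.log (1+W)/2)
      - (1/2) * ((W/(1+W)) * (Real.sqrt W/Real.sqrt (1+W))) *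
          (Real.log W - Real.log (1+W)) := by
    unfold phi
    rw [show 1 - 1/(1+W) = W/(1+W) by field_simp; ring]
    rw [show (1/(1+W)) * (W/(1+W)) = W/(1+W)^2 by rw [div_mul_div_comm, one_mul, sq]]
    rw [Real.sqrt_div hW.le, Real.sqrt_sq h1W.le]
    rw [rpow_3half _ hWW, Real.sqrt_div hW.le]
    rw [show (1:ℝ)/(1+W) = ((1+W))⁻¹ by ring, Real.sqrt_inv]
    rw [show 1 + (Real.sqrt (1+W))⁻¹ = (1 + Real.sqrt (1+W))/Real.sqrt (1+W) by
      field_simp; ring]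
    rw [Real.log_div (by positivity) hs0.ne', Real.log_sqrt h1W.le]
    rw [Real.log_div hW.ne' h1W.ne']
  rw [hphi, hgg1, hgg0]
  have hs2 : Real.sqrt (1+W) ^2 = 1 + W := Real.sq_sqrt h1W.le
  field_simp
  nlinarith [hs2, Real.sq_sqrt hW.le, mul_pos hs0 ht0]

theorem stmt_3 (W lam a : ℝ) (hW : 0 < W) (hlam : 0 < lam)
    (ha : a ∈ Set.Ioo (-1 : ℝ) 1)
    (u u' : ℝ → ℝ)
    (hu : ∀ x ∈ Set.Icc a 1, HasDerivWithinAt u (u' x) (Set.Icc a 1) x)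
    (hu'c : ContinuousOn u' (Set.Icc a 1))
    (hu'' : ∀ x ∈ Set.Ioo a 1, HasDerivAt u' (lam / (2 * (1 + u x + W) ^ 2)) x)
    (hua : u a = -1) (hu'a : u' a = 0) (hu1 : u 1 = 0)
    (hgt : ∀ x ∈ Set.Ioc a 1, u x > -1) :
    lam > LambdaStar W / 4 ∧ a = 1 - Real.sqrt (LambdaStar W / lam) := by
  obtain ⟨haL, haR⟩ := ha
  have h1W : (0:ℝ) < 1 + W := by linarith
  have hvpos : ∀ x ∈ Set.Ioc a 1, 0 < 1 + u x := fun x hx => by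
    have := hgt x hx; linarith
  have hP : ∀ x ∈ Set.Icc a 1, 0 < 1 + u x + W := by
    intro x hx
    rcases eq_or_lt_of_le hx.1 with h|h
    · rw [← h, hua]; linarith
    · have := hvpos x ⟨h, hx.2⟩; linarith
  have huc : ContinuousOn u (Set.Icc a 1) := fun x hx => (hu x hx).continuousWithinAt
  have hud : ∀ y ∈ Set.Ioo a 1, HasDerivAt u (u' y) y := fun y hy =>
    (hu y ⟨hy.1.le, hy.2.le⟩).hasDerivAt (Icc_mem_nhds hy.1 hy.2)
  -- energy identity
  have hE : ∀ x ∈ Set.Icc a 1, u' x ^ 2 = lam * (W⁻¹ - (1 + u x + W)⁻¹) := by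
    intro x hx
    rcases eq_or_lt_of_le hx.1 with h|h
    · rw [← h, hu'a, hua]; norm_num
    · set E : ℝ → ℝ := fun y => u' y ^ 2 - lam * (W⁻¹ - (1 + u y + W)⁻¹) with hEdef
      have hsub : Set.Icc a x ⊆ Set.Icc a 1 := Set.Icc_subset_Icc le_rfl hx.2
      have hEc : ContinuousOn E (Set.Icc a x) := by
        apply ContinuousOn.sub ((hu'c.mono hsub).pow 2)
        apply ContinuousOn.mul continuousOn_const
        apply ContinuousOn.sub continuousOn_const
        apply ContinuousOn.inv₀
          ((continuousOn_const.add (huc.mono hsub)).add continuousOn_const)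
        intro y hy; exact (hP y (hsub hy)).ne'
      have hEd : ∀ y ∈ Set.Ioo a x, HasDerivAt E 0 y := by
        intro y hy
        have hy1 : y ∈ Set.Ioo a 1 := ⟨hy.1, lt_of_lt_of_le hy.2 hx.2⟩
        have hc : HasDerivAt (fun z => 1 + u z + W) (u' y) y := by
          simpa using ((hud y hy1).const_add 1).add_const W
        have hPy : (1 + u y + W) ≠ 0 := (hP y ⟨hy1.1.le, hy1.2.le⟩).ne'
        have h2 : HasDerivAt (fun z => u' z ^ 2)
            (2 * u' y ^ 1 * (lam / (2 * (1 + u y + W) ^ 2))) y := (hu'' y hy1).pow 2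
        have hinv : HasDerivAt (fun z => (1 + u z + W)⁻¹)
            (-(u' y) / (1 + u y + W) ^ 2) y := hc.inv hPy
        have h3 : HasDerivAt (fun z => lam * (W⁻¹ - (1 + u z + W)⁻¹))
            (lam * (0 - -(u' y) / (1 + u y + W) ^ 2)) y :=
          ((hasDerivAt_const y (W⁻¹)).sub hinv).const_mul lam
        have h4 := h2.sub h3
        refine h4.congr_deriv ?_; symm
        field_simp
        ring
      obtain ⟨c, hc, hcc⟩ := exists_hasDerivAt_eq_slope E (fun _ => 0) h hEc hEd
      have hEa : E a = 0 := by simp [hEdef, hu'a, hua]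
      have hEx : E x = 0 := by
        have hx0 : x - a ≠ 0 := sub_ne_zero.mpr h.ne'
        have h5 : (E x - E a) / (x - a) = 0 := hcc.symm
        rw [div_eq_zero_iff, or_iff_left hx0, sub_eq_zero] at h5
        rw [h5, hEa]
      simpa [hEdef, sub_eq_zero] using hEx
  -- u' squared formula
  have hu'sq : ∀ x ∈ Set.Icc a 1,
      u' x ^ 2 = lam * (1 + u x) / (W * (1 + u x + W)) := by
    intro x hx
    rw [hE x hx]
    have := (hP x hx).ne'
    field_simp
    ring
  -- u' positive on Ioc
  have hne0 : ∀ x ∈ Set.Ioc a 1, u' x ≠ 0 := by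
    intro x hx h0
    have h1 := hu'sq x ⟨hx.1.le, hx.2⟩
    rw [h0] at h1
    have : 0 < lam * (1 + u x) / (W * (1 + u x + W)) := by
      apply div_pos (mul_pos hlam (hvpos x hx)) (mul_pos hW (hP x ⟨hx.1.le, hx.2⟩))
    simp at h1; linarith
  obtain ⟨c, hcmem, hcc⟩ := exists_hasDerivAt_eq_slope u u' haR huc hud
  have hcpos : 0 < u' c := by
    rw [hcc, hu1, hua]
    have : 0 < 1 - a := by linarith
    positivity
  have hu'pos : ∀ x ∈ Set.Ioc a 1, 0 < u' x := by
    intro x hx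
    rcases lt_or_ge 0 (u' x) with h|h
    · exact h
    have hxI : x ∈ Set.Icc a 1 := ⟨hx.1.le, hx.2⟩
    have hcI : c ∈ Set.Ioc a 1 := ⟨hcmem.1, hcmem.2.le⟩
    have hsub : Set.uIcc c x ⊆ Set.Ioc a 1 :=
      Set.OrdConnected.uIcc_subset Set.ordConnected_Ioc hcI hx
    have hsub2 : Set.uIcc c x ⊆ Set.Icc a 1 :=
      hsub.trans Set.Ioc_subset_Icc_self
    have h0mem : (0:ℝ) ∈ Set.uIcc (u' c) (u' x) := by
      rw [Set.mem_uIcc]; right; exact ⟨h, hcpos.le⟩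
    obtain ⟨z, hz, hz0⟩ := intermediate_value_uIcc (hu'c.mono hsub2) h0mem
    exact absurd hz0 (hne0 z (hsub hz))
  -- u' = sqrt formula
  have hu'eq : ∀ x ∈ Set.Icc a 1,
      u' x = Real.sqrt (lam * (1 + u x) / (W * (1 + u x + W))) := by
    intro x hx
    rcases eq_or_lt_of_le hx.1 with h|h
    · rw [← h, hu'a, hua]; norm_num
    · rw [← Real.sqrt_sq (hu'pos x ⟨h, hx.2⟩).le, hu'sq x hx]
  -- MVT for H = gg W ∘ (1 + u)
  have hwc : ContinuousOn (fun x => 1 + u x) (Set.Icc a 1) := continuousOn_const.add huc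
  have hHc : ContinuousOn (fun x => gg W (1 + u x)) (Set.Icc a 1) := by
    unfold gg
    apply ContinuousOn.add
    · exact Real.continuous_sqrt.comp_continuousOn (hwc.mul (hwc.add continuousOn_const))
    · apply ContinuousOn.mul continuousOn_const
      apply ContinuousOn.log (hwc.sqrt.add (hwc.add continuousOn_const).sqrt)
      intro x hx
      have h1 : 0 < Real.sqrt (1 + u x + W) := Real.sqrt_pos.mpr (hP x hx)
      have h2 : 0 ≤ Real.sqrt (1 + u x) := Real.sqrt_nonneg _
      exact (add_pos_of_nonneg_of_pos h2 h1).ne'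
  have hHd : ∀ y ∈ Set.Ioo a 1,
      HasDerivAt (fun x => gg W (1 + u x)) (Real.sqrt (lam / W)) y := by
    intro y hy
    have hv : 0 < 1 + u y := hvpos y ⟨hy.1, hy.2.le⟩
    have hvW : 0 < 1 + u y + W := by linarith
    have hw : HasDerivAt (fun x => 1 + u x) (u' y) y := by
      simpa using (hud y hy).const_add 1
    have hcomp := (gg_deriv W hW (1 + u y) hv).comp y hw
    have heq : Real.sqrt (1 + u y + W) / Real.sqrt (1 + u y) * u' y
        = Real.sqrt (lam / W) := by
      rw [hu'eq y ⟨hy.1.le, hy.2.le⟩]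
      rw [Real.sqrt_div (by positivity : (0:ℝ) ≤ lam * (1 + u y)) _,
        Real.sqrt_mul hlam.le, Real.sqrt_mul hW.le, Real.sqrt_div hlam.le]
      have h1 : 0 < Real.sqrt (1 + u y) := Real.sqrt_pos.mpr hv
      have h2 : 0 < Real.sqrt (1 + u y + W) := Real.sqrt_pos.mpr hvW
      have h3 : 0 < Real.sqrt W := Real.sqrt_pos.mpr hW
      field_simp
    have h2 : HasDerivAt (fun x => gg W (1 + u x))
        (Real.sqrt (1 + u y + W) / Real.sqrt (1 + u y) * u' y) y := hcomp
    rwa [heq] at h2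
  obtain ⟨c2, _, hc2⟩ := exists_hasDerivAt_eq_slope (fun x => gg W (1 + u x))
    (fun _ => Real.sqrt (lam / W)) haR hHc hHd
  rw [hu1, hua] at hc2
  norm_num at hc2
  have h1a : 0 < 1 - a := by linarith
  have h2a : 1 - a < 2 := by linarith
  have hsW : 0 < Real.sqrt W := Real.sqrt_pos.mpr hW
  have hIeq : Real.sqrt lam * (1 - a) = Real.sqrt W * (gg W 1 - gg W 0) := by
    rw [Real.sqrt_div hlam.le] at hc2
    field_simp at hc2
    nlinarith [hc2]
  have hJ : Real.sqrt lam * (1 - a) = (1 + W) * Real.sqrt (1 + W) * phi (1 / (1 + W)) :=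
    hIeq.trans (key_alg W hW).symm
  have hsq : lam * (1 - a) ^ 2 = LambdaStar W := by
    calc lam * (1 - a) ^ 2 = (Real.sqrt lam * (1 - a)) ^ 2 := by
          rw [mul_pow, Real.sq_sqrt hlam.le]
    _ = ((1 + W) * Real.sqrt (1 + W) * phi (1 / (1 + W))) ^ 2 := by rw [hJ]
    _ = LambdaStar W := by
        unfold LambdaStar
        have h5 : ((1 + W) * Real.sqrt (1 + W)) ^ 2 = (1 + W) ^ 3 := by
          rw [mul_pow, Real.sq_sqrt h1W.le]; ring
        rw [mul_pow, h5]
  constructor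
  · have h6 : (1 - a) ^ 2 < 4 := by nlinarith
    have h7 := mul_lt_mul_of_pos_left h6 hlam
    rw [hsq] at h7
    linarith
  · have h8 : LambdaStar W / lam = (1 - a) ^ 2 := by
      rw [← hsq]; field_simp
    rw [h8, Real.sqrt_sq h1a.le]; ring
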